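/- For any group G, the hypercenter Z*(G) is contained in nil(G) = {x ∈ G : ⟨x,y⟩ is nilpotent for all y ∈ G}, and nil(G) is contained in the set of right Engel elements of G. -/

import Mathlib

def nilizer {G : Type*} [Group G] (x : G) : Set G :=
  {g | Group.IsNilpotent (Subgroup.closure ({x, g} : Set G))}

def nilSet (G : Type*) [Group G] : Set G :=
  {x | ∀ y : G, Group.IsNilpotent (Subgroup.closure ({x, y} : Set G))}

lemma ucs_nil : ∀ (n : ℕ) {G : Type*} [Group G] (x : G),
    x ∈ upperCentralSeries G n → ∀ y : G,
    Group.IsNilpotent (Subgroup.closure ({x, y} : Set G)) := by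
  intro n
  induction n with
  | zero =>
    intro G _ x hx y
    rw [show upperCentralSeries G 0 = ⊥ from rfl, Subgroup.mem_bot] at hx
    subst hx
    have h1 : Subgroup.closure ({1, y} : Set G) = Subgroup.zpowers y := by
      rw [Subgroup.zpowers_eq_closure]
      apply le_antisymm
      · rw [Subgroup.closure_le]
        rintro a (rfl | rfl)
        · exact one_mem _
        · exact Subgroup.subset_closure rfl
      · exact Subgroup.closure_mono (by simp)
    rw [h1]
    haveI := Subgroup.zpowers_isMulCommutative y
    exact ⟨⟨1, Subgroup.upperCentralSeries_one_eq_top_iff.mpr this⟩⟩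
  | succ n ih =>
    intro G _ x hx y
    set π := QuotientGroup.mk' (Subgroup.center G) with hπ
    have hx' : π x ∈ upperCentralSeries (G ⧸ Subgroup.center G) n := by
      change x ∈ Subgroup.upperCentralSeries G (n + 1) at hx
      rw [← comap_upperCentralSeries_quotient_center n] at hx
      exact hx
    haveI hK : Group.IsNilpotent
        (Subgroup.closure ({π x, π y} : Set (G ⧸ Subgroup.center G))) := ih _ hx' _
    have hmem : ∀ a : Subgroup.closure ({x, y} : Set G), π (a : G) ∈
        Subgroup.closure ({π x, π y} : Set (G ⧸ Subgroup.center G)) := by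
      intro a
      have h2 : π (a : G) ∈ Subgroup.map π (Subgroup.closure ({x, y} : Set G)) :=
        Subgroup.mem_map_of_mem π a.2
      rwa [MonoidHom.map_closure, Set.image_insert_eq, Set.image_singleton] at h2
    let f := ((π.comp (Subgroup.closure ({x, y} : Set G)).subtype).codRestrict
      (Subgroup.closure ({π x, π y} : Set (G ⧸ Subgroup.center G))) hmem)
    apply isNilpotent_of_ker_le_center f
    intro a ha
    have ha' : (a : G) ∈ Subgroup.center G := by
      have : π (a : G) = 1 := congrArg Subtype.val (ha : f a = 1)
      rwa [← MonoidHom.mem_ker, QuotientGroup.ker_mk'] at this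
    rw [Subgroup.mem_center_iff]
    intro b
    ext
    exact (Subgroup.mem_center_iff.mp ha' (b : G))

open scoped commutatorElement

theorem stmt0 {G : Type*} [Group G] :
    ((⨆ n : ℕ, upperCentralSeries G n : Subgroup G) : Set G) ⊆ nilSet G ∧
    nilSet G ⊆ {x : G | ∀ g : G, ∃ n : ℕ, (fun y => ⁅y, g⁆)^[n] x = 1} := by
  constructor
  · intro x hx
    have : x ∈ ⨆ n : ℕ, upperCentralSeries G n := hx
    change x ∈ ⨆ n : ℕ, Subgroup.upperCentralSeries G n at this
    rw [Subgroup.mem_iSup_of_directed (Monotone.directed_le (upperCentralSeries_mono G))] at this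
    obtain ⟨n, hn⟩ := this
    exact fun y => ucs_nil n x hn y
  · intro x hx g
    haveI hnil : Group.IsNilpotent (Subgroup.closure ({x, g} : Set G)) := hx g
    set H := Subgroup.closure ({x, g} : Set G) with hH
    let x' : H := ⟨x, Subgroup.subset_closure (by simp)⟩
    let g' : H := ⟨g, Subgroup.subset_closure (by simp)⟩
    have key : ∀ k : ℕ, (((fun y => ⁅y, g'⁆)^[k] x' : H) : G) = (fun y => ⁅y, g⁆)^[k] x := by
      intro k
      induction k with
      | zero => rfl
      | succ k ihk =>
        rw [Function.iterate_succ_apply', Function.iterate_succ_apply', ← ihk]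
        rfl
    have mem : ∀ k : ℕ, ((fun y => ⁅y, g'⁆)^[k] x') ∈ Subgroup.lowerCentralSeries (⊤ : Subgroup H) k := by
      intro k
      induction k with
      | zero => exact Subgroup.mem_top _
      | succ k ihk =>
        rw [Function.iterate_succ_apply', lowerCentralSeries_succ]
        exact Subgroup.commutator_mem_commutator ihk (Subgroup.mem_top _)
    refine ⟨Group.nilpotencyClass H, ?_⟩
    have := mem (Group.nilpotencyClass H)
    rw [lowerCentralSeries_nilpotencyClass, Subgroup.mem_bot] at this
    rw [← key, this]
    rfl
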